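/- If X is a non-compact, locally compact, metrizable space with a countable basis of compact open sets, then X can be written as a countable disjoint union of non-empty compact open subsets. -/

import Mathlib

open MeasureTheory Topology ENNReal TopologicalSpace

/-- A set is compact open. -/
def IsCompactOpen {X : Type*} [TopologicalSpace X] (U : Set X) : Prop :=
  IsCompact U ∧ IsOpen U

/-- The defective set of a measure: points all of whose compact open
neighbourhoods have infinite measure. -/
def DefectiveSet {X : Type*} [TopologicalSpace X] [MeasurableSpace X]
    (μ : Measure X) : Set X :=
  {x | ∀ U : Set X, IsCompactOpen U → x ∈ U → μ U = ⊤}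

/-- A compact open set `V` is good for `μ`. -/
def GoodSet {X : Type*} [TopologicalSpace X] [MeasurableSpace X]
    (μ : Measure X) (V : Set X) : Prop :=
  ∀ U : Set X, IsCompactOpen U → μ U < μ V →
    ∃ W : Set X, W ⊆ V ∧ IsCompactOpen W ∧ μ W = μ U

/-- The measure `μ` is good: every compact open set is good for `μ`. -/
def Good {X : Type*} [TopologicalSpace X] [MeasurableSpace X]
    (μ : Measure X) : Prop :=
  ∀ V : Set X, IsCompactOpen V → GoodSet μ V

/-- The restriction of `μ` to the (open) subset `A` is good: compact open
subsets of the subspace `A` are exactly compact open subsets of `X` contained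
in `A`. -/
def GoodOn {X : Type*} [TopologicalSpace X] [MeasurableSpace X]
    (μ : Measure X) (A : Set X) : Prop :=
  ∀ U V : Set X, IsCompactOpen U → U ⊆ A → IsCompactOpen V → V ⊆ A → μ U < μ V →
    ∃ W : Set X, W ⊆ V ∧ IsCompactOpen W ∧ μ W = μ U

/-- The compact open values set, as a set of extended nonnegative reals. -/
def SE {X : Type*} [TopologicalSpace X] [MeasurableSpace X]
    (μ : Measure X) : Set ℝ≥0∞ :=
  {v | v ≠ ⊤ ∧ ∃ U : Set X, IsCompactOpen U ∧ μ U = v}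

/-- The compact open values set of the restriction of `μ` to `A`. -/
def SEOn {X : Type*} [TopologicalSpace X] [MeasurableSpace X]
    (μ : Measure X) (A : Set X) : Set ℝ≥0∞ :=
  {v | v ≠ ⊤ ∧ ∃ U : Set X, IsCompactOpen U ∧ U ⊆ A ∧ μ U = v}

/-- The compact open values set, as a set of reals. -/
def Sreal {X : Type*} [TopologicalSpace X] [MeasurableSpace X]
    (μ : Measure X) : Set ℝ :=
  {r | ∃ U : Set X, IsCompactOpen U ∧ μ U ≠ ⊤ ∧ (μ U).toReal = r}

/-- The compact open values set of the restriction of `μ` to `A`, as reals. -/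
def SrealOn {X : Type*} [TopologicalSpace X] [MeasurableSpace X]
    (μ : Measure X) (A : Set X) : Set ℝ :=
  {r | ∃ U : Set X, IsCompactOpen U ∧ U ⊆ A ∧ μ U ≠ ⊤ ∧ (μ U).toReal = r}

/-- A measure is full if every non-empty open set has positive measure. -/
def IsFull {X : Type*} [TopologicalSpace X] [MeasurableSpace X]
    (μ : Measure X) : Prop :=
  ∀ U : Set X, IsOpen U → U.Nonempty → 0 < μ U

/-- A measure is non-atomic if every singleton has measure zero. -/
def NonAtomic {X : Type*} [MeasurableSpace X] (μ : Measure X) : Prop :=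
  ∀ x : X, μ {x} = 0

/-- The space has a countable basis consisting of compact open sets. -/
def HasCompactOpenBasis (X : Type*) [TopologicalSpace X] : Prop :=
  ∃ B : Set (Set X), B.Countable ∧ TopologicalSpace.IsTopologicalBasis B ∧
    ∀ U ∈ B, IsCompact U ∧ IsOpen U

/-- The space has no isolated points. -/
def NoIsolatedPoints (X : Type*) [TopologicalSpace X] : Prop :=
  ∀ x : X, ¬ IsOpen ({x} : Set X)

theorem stmt0 {X : Type*} [TopologicalSpace X] [MetrizableSpace X]
    [LocallyCompactSpace X] [NoncompactSpace X] (hB : HasCompactOpenBasis X) :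
    ∃ f : ℕ → Set X, (∀ n, IsCompactOpen (f n) ∧ (f n).Nonempty) ∧
      Pairwise (Function.onFun Disjoint f) ∧ (⋃ n, f n) = Set.univ := by
  classical
  obtain ⟨B, hBc, hBb, hBco⟩ := hB
  have hXne : Nonempty X := by
    by_contra h
    rw [not_nonempty_iff] at h
    exact noncompact_univ X (by simp [Set.univ_eq_empty_iff.2 h])
  obtain ⟨x0⟩ := hXne
  have hx0 : x0 ∈ ⋃₀ B := hBb.sUnion_eq ▸ Set.mem_univ x0
  obtain ⟨U0, hU0B, _⟩ := hx0
  obtain ⟨g, hg⟩ := Set.Countable.exists_eq_range hBc ⟨U0, hU0B⟩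
  have hgB : ∀ n, g n ∈ B := fun n => hg ▸ Set.mem_range_self n
  have hgc : ∀ n, IsCompact (g n) := fun n => (hBco _ (hgB n)).1
  have hgo : ∀ n, IsOpen (g n) := fun n => (hBco _ (hgB n)).2
  set L : ℕ → Set X := fun n => ⋃ i ∈ Finset.range n, g i with hLdef
  have hLc : ∀ n, IsCompact (L n) :=
    fun n => (Finset.range n).isCompact_biUnion (fun i _ => hgc i)
  have hLo : ∀ n, IsOpen (L n) := fun n => isOpen_biUnion (fun i _ => hgo i)
  have hLmono : ∀ {m n : ℕ}, m ≤ n → L m ⊆ L n := by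
    intro m n hmn
    exact Set.biUnion_subset_biUnion_left (fun i hi =>
      Finset.mem_range.2 (lt_of_lt_of_le (Finset.mem_range.1 hi) hmn))
  set D : ℕ → Set X := fun n => L (n + 1) \ L n with hDdef
  have hDco : ∀ n, IsCompactOpen (D n) := fun n =>
    ⟨(hLc (n + 1)).diff (hLo n), (hLo (n + 1)).sdiff (hLc n).isClosed⟩
  have hDsub : ∀ n, D n ⊆ L (n + 1) := fun n => Set.diff_subset
  have hDdisj : ∀ m n : ℕ, m ≠ n → Disjoint (D m) (D n) := by
    have key : ∀ m n : ℕ, m < n → Disjoint (D m) (D n) := by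
      intro m n hmn
      refine Set.disjoint_left.2 fun x hxm hxn => hxn.2 ?_
      exact hLmono hmn (hDsub m hxm)
    intro m n hmn
    rcases lt_or_gt_of_ne hmn with h | h
    · exact key m n h
    · exact (key n m h).symm
  have hDunion : (⋃ n, D n) = Set.univ := by
    ext x
    simp only [Set.mem_iUnion, Set.mem_univ, iff_true]
    have hx : x ∈ ⋃₀ B := hBb.sUnion_eq ▸ Set.mem_univ x
    obtain ⟨U, hUB, hxU⟩ := hx
    rw [hg] at hUB
    obtain ⟨n0, rfl⟩ := hUB
    have hex : ∃ n, x ∈ g n := ⟨n0, hxU⟩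
    refine ⟨Nat.find hex, ?_, ?_⟩
    · exact Set.mem_biUnion (Finset.self_mem_range_succ _) (Nat.find_spec hex)
    · intro hxL
      obtain ⟨i, hi, hxi⟩ := Set.mem_iUnion₂.1 hxL
      exact Nat.find_min hex (Finset.mem_range.1 hi) hxi
  set S : ℕ → Prop := fun n => (D n).Nonempty with hSdef
  have hinf : (setOf S).Infinite := by
    intro hfin
    obtain ⟨N, hN⟩ := hfin.bddAbove
    have hsub : (Set.univ : Set X) ⊆ L (N + 1) := by
      intro x _
      have : x ∈ ⋃ n, D n := hDunion ▸ Set.mem_univ x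
      obtain ⟨n, hn⟩ := Set.mem_iUnion.1 this
      have hnS : n ∈ setOf S := ⟨x, hn⟩
      exact hLmono (Nat.succ_le_succ (hN hnS)) (hDsub n hn)
    exact noncompact_univ X ((hLc (N + 1)).of_isClosed_subset isClosed_univ hsub)
  refine ⟨fun k => D (Nat.nth S k), ?_, ?_, ?_⟩
  · exact fun k => ⟨hDco _, Nat.nth_mem_of_infinite hinf k⟩
  · intro i j hij
    exact hDdisj _ _ fun h => hij (Nat.nth_injective hinf h)
  · ext x
    simp only [Set.mem_iUnion, Set.mem_univ, iff_true]
    have : x ∈ ⋃ n, D n := hDunion ▸ Set.mem_univ x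
    obtain ⟨n, hn⟩ := Set.mem_iUnion.1 this
    have hnS : n ∈ setOf S := ⟨x, hn⟩
    replace hnS : n ∈ Set.range (Nat.nth S) := by rw [Nat.range_nth_of_infinite hinf]; exact hnS
    obtain ⟨k, hk⟩ := hnS
    exact ⟨k, hk ▸ hn⟩
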